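/- For every i ∈ ℤ^n and every ℓ = (ℓ_a)_{a∈A} ∈ ℤ^{|A|} with Σ_{a∈A} ℓ_a·a = 0, the formal power series F_i(Λ) satisfies the box equation (∏_{a : ℓ_a > 0} (∂/∂Λ_a)^{ℓ_a}) F_i(Λ) = (∏_{a : ℓ_a < 0} (∂/∂Λ_a)^{−ℓ_a}) F_i(Λ) in ℚ[[Λ_a : a ∈ A]]. -/
import Mathlib


/-- The `A`-hypergeometric series `F_i(Λ) = Σ_u Λ^u / ∏_a u_a!`, summed over
`u ∈ ℤ_{≥0}^{|A|}` with `Σ_a u_a·a = i`, as a multivariate formal power series in the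
variables `Λ_a`, `a ∈ A`. -/
noncomputable def hypergeomF {n : ℕ} (A : Finset (Fin n → ℤ)) (i : Fin n → ℤ) :
    MvPowerSeries {a // a ∈ A} ℚ :=
  fun u => if (∑ a : {a // a ∈ A}, u a • (a : Fin n → ℤ)) = i then
    (∏ a : {a // a ∈ A}, ((u a).factorial : ℚ))⁻¹ else 0

/-- The formal differential operator `∏_a (∂/∂Λ_a)^{m_a}` on multivariate formal power
series: the coefficient of `Λ^u` in `(∏_a (∂/∂Λ_a)^{m_a}) f` is
`(∏_a (u_a+m_a)!/u_a!)` times the coefficient of `Λ^{u+m}` in `f`. -/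
noncomputable def multiDeriv {σ : Type*} (m : σ →₀ ℕ) (f : MvPowerSeries σ ℚ) :
    MvPowerSeries σ ℚ :=
  fun u => (∏ a ∈ m.support, (((u a + m a).factorial : ℚ) / ((u a).factorial : ℚ))) * f (u + m)


lemma fact_prod_key {σ : Type*} [Fintype σ] (m u : σ →₀ ℕ) :
    (∏ a ∈ m.support, (((u a + m a).factorial : ℚ) / ((u a).factorial : ℚ))) *
      (∏ a : σ, (((u + m) a).factorial : ℚ))⁻¹ =
    (∏ a : σ, ((u a).factorial : ℚ))⁻¹ := by
  have h1 : (∏ a ∈ m.support, (((u a + m a).factorial : ℚ) / ((u a).factorial : ℚ)))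
      = ∏ a : σ, (((u a + m a).factorial : ℚ) / ((u a).factorial : ℚ)) := by
    apply Finset.prod_subset (Finset.subset_univ _)
    intro a _ ha
    have : m a = 0 := Finsupp.notMem_support_iff.mp ha
    rw [this, add_zero, div_self (Nat.cast_ne_zero.mpr (Nat.factorial_ne_zero _))]
  rw [h1]
  have h2 : (∏ a : σ, ((u a).factorial : ℚ)) *
      ∏ a : σ, (((u a + m a).factorial : ℚ) / ((u a).factorial : ℚ)) =
      ∏ a : σ, (((u + m) a).factorial : ℚ) := by
    rw [← Finset.prod_mul_distrib]
    refine Finset.prod_congr rfl fun a _ => ?_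
    have hne2 : ((u a).factorial : ℚ) ≠ 0 := Nat.cast_ne_zero.mpr (Nat.factorial_ne_zero _)
    rw [Finsupp.add_apply]
    field_simp
  have hu : (∏ a : σ, ((u a).factorial : ℚ)) ≠ 0 :=
    Finset.prod_ne_zero_iff.mpr fun a _ => Nat.cast_ne_zero.mpr (Nat.factorial_ne_zero _)
  have hum : (∏ a : σ, (((u + m) a).factorial : ℚ)) ≠ 0 :=
    Finset.prod_ne_zero_iff.mpr fun a _ => Nat.cast_ne_zero.mpr (Nat.factorial_ne_zero _)
  have h3 : (∏ a : σ, (((u a + m a).factorial : ℚ) / ((u a).factorial : ℚ)))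
      = (∏ a : σ, (((u + m) a).factorial : ℚ)) / (∏ a : σ, ((u a).factorial : ℚ)) := by
    rw [eq_div_iff hu, mul_comm]
    exact h2
  rw [h3, div_eq_mul_inv, mul_right_comm, mul_inv_cancel₀ hum, one_mul]

/-- For every `i ∈ ℤⁿ` and every `ℓ = (ℓ_a) ∈ ℤ^{|A|}` with `Σ_a ℓ_a·a = 0`, the series
`F_i(Λ)` satisfies the box equation
`(∏_{ℓ_a>0} (∂/∂Λ_a)^{ℓ_a}) F_i = (∏_{ℓ_a<0} (∂/∂Λ_a)^{−ℓ_a}) F_i`. -/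
theorem hypergeomF_box_equation
    (n : ℕ) (hn : 1 ≤ n) (A : Finset (Fin n → ℤ))
    (hspan : Submodule.span ℝ ((fun a : Fin n → ℤ => fun j => (a j : ℝ)) '' A) = ⊤)
    (i : Fin n → ℤ) (ℓ : {a // a ∈ A} → ℤ)
    (hℓ : (∑ a : {a // a ∈ A}, ℓ a • (a : Fin n → ℤ)) = 0) :
    multiDeriv (Finsupp.equivFunOnFinite.symm fun a => (ℓ a).toNat) (hypergeomF A i) =
      multiDeriv (Finsupp.equivFunOnFinite.symm fun a => (-ℓ a).toNat) (hypergeomF A i) := by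
  funext u
  set mp := Finsupp.equivFunOnFinite.symm fun a : {a // a ∈ A} => (ℓ a).toNat with hmp
  set mm := Finsupp.equivFunOnFinite.symm fun a : {a // a ∈ A} => (-ℓ a).toNat with hmm
  have hsum : (∑ a : {a // a ∈ A}, ((u + mp) a) • (a : Fin n → ℤ)) =
      (∑ a : {a // a ∈ A}, ((u + mm) a) • (a : Fin n → ℤ)) := by
    have key : ∀ a : {a // a ∈ A}, (mp a) • (a : Fin n → ℤ) - (mm a) • (a : Fin n → ℤ)
        = ℓ a • (a : Fin n → ℤ) := by
      intro a
      show ((ℓ a).toNat) • (a : Fin n → ℤ) - ((-ℓ a).toNat) • (a : Fin n → ℤ) = _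
      rw [← natCast_zsmul, ← natCast_zsmul, ← sub_smul, Int.toNat_sub_toNat_neg]
    have h2 : (∑ a : {a // a ∈ A}, (mp a) • (a : Fin n → ℤ)) =
        ∑ a : {a // a ∈ A}, (mm a) • (a : Fin n → ℤ) := by
      rw [← sub_eq_zero, ← Finset.sum_sub_distrib]
      simp only [key]
      exact hℓ
    simp only [Finsupp.add_apply, add_smul, Finset.sum_add_distrib, h2]
  show (∏ a ∈ mp.support, _) * hypergeomF A i (u + mp) =
    (∏ a ∈ mm.support, _) * hypergeomF A i (u + mm)
  unfold hypergeomF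
  by_cases h : (∑ a : {a // a ∈ A}, ((u + mp) a) • (a : Fin n → ℤ)) = i
  · rw [if_pos h, if_pos (hsum ▸ h), fact_prod_key, fact_prod_key]
  · rw [if_neg h, if_neg (fun hc => h (hsum ▸ hc)), mul_zero, mul_zero]
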